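/- Conversely, let q be a nonzero complex number with a fixed square root q^{1/2}, and let A be a complex associative unital algebra with elements I21, I32, I31 satisfying [I21,I32]_q = I31, [I32,I31]_q = I21, [I31,I21]_q = I32, where [A,B]_q = q^{1/2}AB − q^{-1/2}BA. Then I21 and I32 satisfy the two trilinear relations I21²I32 − (q+q⁻¹)I21I32I21 + I32I21² = −I32 and I21I32² − (q+q⁻¹)I32I21I32 + I32²I21 = −I21. -/

import Mathlib

/-- Conversely, if `I21, I32, I31` satisfy the three q-commutation relations
`[I21,I32]_q = I31`, `[I32,I31]_q = I21`, `[I31,I21]_q = I32` (with `[X,Y]_q =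
q^{1/2} X Y - q^{-1/2} Y X`, `s = q^{1/2}`), then `I21`, `I32` satisfy the two defining
trilinear relations of `U'_q(so_3)`. -/
theorem stmt_1 (q s : ℂ) (hq : q ≠ 0) (hs : s ^ 2 = q)
    {A : Type*} [Ring A] [Algebra ℂ A] (I21 I32 I31 : A)
    (r1 : s • (I21 * I32) - s⁻¹ • (I32 * I21) = I31)
    (r2 : s • (I32 * I31) - s⁻¹ • (I31 * I32) = I21)
    (r3 : s • (I31 * I21) - s⁻¹ • (I21 * I31) = I32) :
    I21 ^ 2 * I32 - (q + q⁻¹) • (I21 * I32 * I21) + I32 * I21 ^ 2 = -I32 ∧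
    I21 * I32 ^ 2 - (q + q⁻¹) • (I32 * I21 * I32) + I32 ^ 2 * I21 = -I21 := by
  have hs0 : s ≠ 0 := by
    intro h; apply hq; rw [← hs, h]; ring
  subst hs
  constructor
  · have h := r3
    rw [← r1] at h
    simp only [sub_mul, mul_sub, smul_mul_assoc, mul_smul_comm, smul_sub, smul_smul,
      mul_assoc, pow_two] at h ⊢
    refine Eq.trans ?_ (congrArg Neg.neg h)
    match_scalars <;> field_simp <;> ring
  · have h := r2
    rw [← r1] at h
    simp only [sub_mul, mul_sub, smul_mul_assoc, mul_smul_comm, smul_sub, smul_smul,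
      mul_assoc, pow_two] at h ⊢
    refine Eq.trans ?_ (congrArg Neg.neg h)
    match_scalars <;> field_simp <;> ring
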